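/- Define sequences by d₁ = t₁ = Δ, p₁ = Δ(1+ξ), and the recurrences d_i = (1+δ_{i−1})d_{i−1}(1−(1−1/p_{i−1})^{2(t_{i−1}−1)}), t_i = (1+δ_{i−1})t_{i−1}(1−(t_{i−1}/p_{i−1})(1−1/p_{i−1})^{2t_{i−1}})(1−(1−1/p_{i−1})^{2t_{i−1}}), p_i = (1−δ_{i−1})p_{i−1}(1−(t_{i−1}/p_{i−1})(1−1/p_{i−1})^{2t_{i−1}})², with β_i = p_i/t_i − 1 and δ_i = β_i/η. Suppose at index i−1 we have min{d_{i−1},t_{i−1},p_{i−1}} = ω(log Δ), β_{i−1} = o(1/log Δ), and δ_{i−1} = o(β_{i−1}/log Δ). Then β_i = β_{i−1}(1 ± o(1/log Δ))/(1 − e^{−2}). -/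

import Mathlib

open Filter

lemma aux_id (t p δ q e L : ℝ) (ht : t ≠ 0) (hp : p ≠ 0)
    (hpt : p - t ≠ 0) (hq : 1 - q ≠ 0) (hδ : 1 + δ ≠ 0) (ha : 1 - t / p * q ≠ 0) :
    (((1 - δ) * p * (1 - t / p * q) ^ 2 / ((1 + δ) * t * (1 - t / p * q) * (1 - q)) - 1)
        * (1 - e) / (p / t - 1) - 1) * L
      = ((q - e) * L / (1 - q) - (δ * L / (p / t - 1)) * (p / t - 1)
          - (δ * L / (p / t - 1)) * (2 + (p / t - 1) / (1 - q)) * (1 - e)) / (1 + δ) := by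
  have h1 : (1 - δ) * p * (1 - t / p * q) ^ 2 / ((1 + δ) * t * (1 - t / p * q) * (1 - q))
      = (1 - δ) * (p - t * q) / ((1 + δ) * t * (1 - q)) := by
    rw [div_eq_div_iff (by exact mul_ne_zero (mul_ne_zero (mul_ne_zero hδ ht) ha) hq)
      (mul_ne_zero (mul_ne_zero hδ ht) hq)]
    field_simp
  rw [h1]
  have hβ' : p / t - 1 = (p - t) / t := by field_simp
  rw [hβ']
  field_simp
  ring

theorem stmt7 (d' t' p' η δ' : ℕ → ℝ)
    (hη : ∀ Δ, 1 ≤ η Δ)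
    (hd'pos : ∀ Δ, 0 < d' Δ) (ht'pos : ∀ Δ, 0 < t' Δ) (hp'pos : ∀ Δ, 0 < p' Δ)
    (hβpos : ∀ Δ, 0 < p' Δ / t' Δ - 1)
    (hδdef : ∀ Δ, δ' Δ = (p' Δ / t' Δ - 1) / η Δ)
    (hmin : Tendsto (fun Δ : ℕ => min (d' Δ) (min (t' Δ) (p' Δ)) / Real.log Δ)
      atTop atTop)
    (hβ : Tendsto (fun Δ : ℕ => (p' Δ / t' Δ - 1) * Real.log Δ) atTop (nhds 0))
    (hδ : Tendsto (fun Δ : ℕ => δ' Δ * Real.log Δ / (p' Δ / t' Δ - 1)) atTop (nhds 0)) :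
    Tendsto (fun Δ : ℕ =>
      let β := p' Δ / t' Δ - 1
      let a := 1 - t' Δ / p' Δ * (1 - 1 / p' Δ) ^ (2 * t' Δ)
      let b := 1 - (1 - 1 / p' Δ) ^ (2 * t' Δ)
      let ti := (1 + δ' Δ) * t' Δ * a * b
      let pi := (1 - δ' Δ) * p' Δ * a ^ 2
      ((pi / ti - 1) * (1 - Real.exp (-2)) / β - 1) * Real.log Δ)
      atTop (nhds 0) := by
  set L : ℕ → ℝ := fun Δ : ℕ => Real.log Δ with hLdef
  set β : ℕ → ℝ := fun Δ => p' Δ / t' Δ - 1 with hβd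
  set q : ℕ → ℝ := fun Δ => (1 - 1 / p' Δ) ^ (2 * t' Δ) with hqd
  -- basic pointwise facts
  have htp : ∀ Δ, t' Δ < p' Δ := fun Δ => by
    have h1 : (1 : ℝ) < p' Δ / t' Δ := by have := hβpos Δ; simp only [hβd] at *; linarith
    exact (one_lt_div (ht'pos Δ)).mp h1
  have hδpos : ∀ Δ, 0 < δ' Δ := fun Δ => by
    rw [hδdef]
    exact div_pos (hβpos Δ) (lt_of_lt_of_le one_pos (hη Δ))
  have hδleβ : ∀ Δ, δ' Δ ≤ β Δ := fun Δ => by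
    rw [hδdef]
    exact div_le_self (hβpos Δ).le (hη Δ)
  -- log tends to infinity
  have hLtop : Tendsto L atTop atTop :=
    Real.tendsto_log_atTop.comp tendsto_natCast_atTop_atTop
  have hL1 : ∀ᶠ Δ in atTop, (1 : ℝ) ≤ L Δ := hLtop.eventually_ge_atTop 1
  -- min tends to infinity, hence p' does
  have hmintop : Tendsto (fun Δ => min (d' Δ) (min (t' Δ) (p' Δ))) atTop atTop := by
    refine (hmin.atTop_mul_atTop₀ hLtop).congr' ?_
    filter_upwards [hL1] with Δ h1
    exact div_mul_cancel₀ _ (by linarith : L Δ ≠ 0)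
  have hptop : Tendsto p' atTop atTop :=
    tendsto_atTop_mono (fun Δ => (min_le_right _ _).trans (min_le_right _ _)) hmintop
  have hp2 : ∀ᶠ Δ in atTop, (2 : ℝ) ≤ p' Δ := hptop.eventually_ge_atTop 2
  -- L / p' → 0
  have hpL : Tendsto (fun Δ => L Δ / p' Δ) atTop (nhds 0) := by
    have h1 : Tendsto (fun Δ => p' Δ / L Δ) atTop atTop := by
      refine tendsto_atTop_mono' atTop ?_ hmin
      filter_upwards [hL1] with Δ h1
      exact div_le_div_of_nonneg_right
        ((min_le_right _ _).trans (min_le_right _ _)) (by linarith)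
    have h2 := h1.inv_tendsto_atTop
    refine h2.congr (fun Δ => ?_)
    simp [inv_div]
  -- β → 0
  have hβ0 : Tendsto β atTop (nhds 0) := by
    have h1 := hβ.mul hLtop.inv_tendsto_atTop
    rw [mul_zero] at h1
    refine h1.congr' ?_
    filter_upwards [hL1] with Δ h1
    have : L Δ ≠ 0 := by linarith
    exact mul_inv_cancel_right₀ this (p' Δ / t' Δ - 1)
  -- δ → 0
  have hδ0 : Tendsto δ' atTop (nhds 0) :=
    squeeze_zero (fun Δ => (hδpos Δ).le) hδleβ hβ0
  -- the error term E
  set E : ℕ → ℝ := fun Δ => 2 * t' Δ * Real.log (1 - 1 / p' Δ) + 2 with hEdef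
  have hEbound : ∀ᶠ Δ in atTop, |E Δ| ≤ 2 * β Δ + 4 * (t' Δ / p' Δ ^ 2) := by
    filter_upwards [hp2] with Δ hp2
    have hp0 := hp'pos Δ
    have ht0 := ht'pos Δ
    have htpΔ := htp Δ
    have hβp := hβpos Δ
    have hx0 : (0 : ℝ) < 1 / p' Δ := by positivity
    have hx2 : 1 / p' Δ ≤ 1 / 2 := by
      rw [div_le_div_iff₀ hp0 two_pos]; linarith
    have h1x : (0 : ℝ) < 1 - 1 / p' Δ := by linarith
    have hub : Real.log (1 - 1 / p' Δ) ≤ -(1 / p' Δ) := by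
      have := Real.log_le_sub_one_of_pos h1x
      linarith
    have hlb : -(1 / p' Δ) - 2 * (1 / p' Δ) ^ 2 ≤ Real.log (1 - 1 / p' Δ) := by
      have h2 := Real.log_le_sub_one_of_pos (show (0:ℝ) < (1 - 1 / p' Δ)⁻¹ by positivity)
      rw [Real.log_inv] at h2
      have h3 : (1 - 1 / p' Δ)⁻¹ - 1 ≤ 1 / p' Δ + 2 * (1 / p' Δ) ^ 2 := by
        rw [inv_eq_one_div, div_sub' h1x.ne', div_le_iff₀ h1x]
        nlinarith [sq_nonneg (1 / p' Δ)]
      nlinarith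
    have key : 2 - 2 * (t' Δ / p' Δ) = 2 * β Δ * (t' Δ / p' Δ) := by
      simp only [hβd]
      field_simp
    have htp1 : t' Δ / p' Δ ≤ 1 := by
      rw [div_le_one hp0]; linarith
    have htp0 : 0 < t' Δ / p' Δ := by positivity
    have htpp0 : 0 < t' Δ / p' Δ ^ 2 := by positivity
    have hβΔ0 : 0 < β Δ := hβp
    have hEub : E Δ ≤ 2 * β Δ := by
      have h5 : 2 * t' Δ * Real.log (1 - 1 / p' Δ) ≤ 2 * t' Δ * (-(1 / p' Δ)) :=
        mul_le_mul_of_nonneg_left hub (by positivity)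
      have h6 : 2 * t' Δ * (-(1 / p' Δ)) = -(2 * (t' Δ / p' Δ)) := by ring
      have h7 : 2 * β Δ * (t' Δ / p' Δ) ≤ 2 * β Δ := by nlinarith
      have hEeq : E Δ = 2 * t' Δ * Real.log (1 - 1 / p' Δ) + 2 := rfl
      rw [hEeq]
      linarith
    have hElb : -(2 * β Δ + 4 * (t' Δ / p' Δ ^ 2)) ≤ E Δ := by
      have h8 : 2 * t' Δ * (-(1 / p' Δ) - 2 * (1 / p' Δ) ^ 2)
          ≤ 2 * t' Δ * Real.log (1 - 1 / p' Δ) :=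
        mul_le_mul_of_nonneg_left hlb (by positivity)
      have h9 : 2 * t' Δ * (-(1 / p' Δ) - 2 * (1 / p' Δ) ^ 2)
          = -(2 * (t' Δ / p' Δ)) - 4 * (t' Δ / p' Δ ^ 2) := by ring
      have h10 : 0 ≤ 2 * β Δ * (t' Δ / p' Δ) := by positivity
      have hEeq : E Δ = 2 * t' Δ * Real.log (1 - 1 / p' Δ) + 2 := rfl
      rw [hEeq]
      linarith
    exact abs_le.2 ⟨hElb, hEub.trans (le_add_of_nonneg_right (by positivity))⟩
  -- E * L → 0
  have hEL : Tendsto (fun Δ => E Δ * L Δ) atTop (nhds 0) := by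
    refine squeeze_zero_norm'
      (a := fun Δ => 2 * (β Δ * L Δ) + 4 * (L Δ / p' Δ)) ?_ ?_
    · filter_upwards [hEbound, hL1, hp2] with Δ hE h1 h2
      have hL0 : (0:ℝ) ≤ L Δ := by linarith
      have hp0 := hp'pos Δ
      have htpΔ := htp Δ
      have ht0 := ht'pos Δ
      have hstep : |E Δ| * L Δ ≤ (2 * β Δ + 4 * (t' Δ / p' Δ ^ 2)) * L Δ :=
        mul_le_mul_of_nonneg_right hE hL0
      have hstep2 : t' Δ / p' Δ ^ 2 * L Δ ≤ L Δ / p' Δ := by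
        rw [div_mul_eq_mul_div, div_le_div_iff₀ (by positivity) hp0]
        nlinarith [mul_nonneg (mul_nonneg (sub_nonneg.2 htpΔ.le) hL0) hp0.le]
      rw [Real.norm_eq_abs, abs_mul, abs_of_nonneg hL0]
      nlinarith
    · have h := (hβ.const_mul 2).add (hpL.const_mul 4)
      simpa using h
  -- E → 0
  have hE0 : Tendsto E atTop (nhds 0) := by
    refine squeeze_zero_norm' ?_ (by simpa using hEL.abs)
    filter_upwards [hL1] with Δ h1
    have h2 : |E Δ| ≤ |E Δ| * L Δ := le_mul_of_one_le_right (abs_nonneg _) h1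
    calc ‖E Δ‖ = |E Δ| := rfl
      _ ≤ |E Δ| * L Δ := h2
      _ = |E Δ * L Δ| := by rw [abs_mul, abs_of_nonneg (by linarith : (0:ℝ) ≤ L Δ)]
      _ ≤ |E Δ| * |L Δ| := (abs_mul _ _).le
  have hE1 : ∀ᶠ Δ in atTop, |E Δ| ≤ 1 := by
    have h := Metric.tendsto_nhds.mp hE0 1 one_pos
    filter_upwards [h] with Δ h
    rw [Real.dist_eq, sub_zero] at h
    linarith
  -- (q - e⁻²) * L → 0
  have hA : Tendsto (fun Δ => (q Δ - Real.exp (-2)) * L Δ) atTop (nhds 0) := by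
    refine squeeze_zero_norm'
      (a := fun Δ => 2 * Real.exp (-2) * |E Δ * L Δ|) ?_ ?_
    · filter_upwards [hE1, hp2, hL1] with Δ hE h2 h1
      have hp0 := hp'pos Δ
      have h1x : (0 : ℝ) < 1 - 1 / p' Δ := by
        have : 1 / p' Δ ≤ 1 / 2 := by rw [div_le_div_iff₀ hp0 two_pos]; linarith
        linarith
      have hqe : q Δ = Real.exp (-2) * (Real.exp (E Δ)) := by
        simp only [hqd]
        rw [Real.rpow_def_of_pos h1x]
        rw [← Real.exp_add]
        congr 1
        have hEeq : E Δ = 2 * t' Δ * Real.log (1 - 1 / p' Δ) + 2 := rfl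
        rw [hEeq]
        ring
      have habs : |q Δ - Real.exp (-2)| ≤ Real.exp (-2) * (2 * |E Δ|) := by
        rw [hqe]
        have heq : Real.exp (-2) * Real.exp (E Δ) - Real.exp (-2)
            = Real.exp (-2) * (Real.exp (E Δ) - 1) := by ring
        rw [heq, abs_mul, abs_of_pos (Real.exp_pos _)]
        exact mul_le_mul_of_nonneg_left (Real.abs_exp_sub_one_le hE) (Real.exp_pos _).le
      have hL0 : (0:ℝ) ≤ L Δ := by linarith
      rw [Real.norm_eq_abs, abs_mul, abs_of_nonneg hL0, abs_mul, abs_of_nonneg hL0]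
      nlinarith [abs_nonneg (E Δ), abs_nonneg (q Δ - Real.exp (-2)), Real.exp_pos (-2:ℝ)]
    · have h := hEL.abs.const_mul (2 * Real.exp (-2))
      simpa using h
  -- q → e⁻²
  have hqlim : Tendsto q atTop (nhds (Real.exp (-2))) := by
    have hsub : Tendsto (fun Δ => q Δ - Real.exp (-2)) atTop (nhds 0) := by
      refine squeeze_zero_norm' ?_ (by simpa using hA.abs)
      filter_upwards [hL1] with Δ h1
      have h2 : |q Δ - Real.exp (-2)| ≤ |q Δ - Real.exp (-2)| * L Δ :=
        le_mul_of_one_le_right (abs_nonneg _) h1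
      calc ‖q Δ - Real.exp (-2)‖ = |q Δ - Real.exp (-2)| := rfl
        _ ≤ |q Δ - Real.exp (-2)| * L Δ := h2
        _ = |(q Δ - Real.exp (-2)) * L Δ| := by
            rw [abs_mul, abs_of_nonneg (by linarith : (0:ℝ) ≤ L Δ)]
        _ ≤ |q Δ - Real.exp (-2)| * |L Δ| := (abs_mul _ _).le
    have h := hsub.add_const (Real.exp (-2))
    simpa using h
  -- assemble the limit
  have hene : 1 - Real.exp (-2) ≠ 0 := by
    have h : Real.exp (-2:ℝ) < Real.exp 0 := Real.exp_lt_exp.2 (by norm_num)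
    rw [Real.exp_zero] at h
    linarith
  have h1q : Tendsto (fun Δ => 1 - q Δ) atTop (nhds (1 - Real.exp (-2))) :=
    tendsto_const_nhds.sub hqlim
  have hfinal : Tendsto (fun Δ => ((q Δ - Real.exp (-2)) * L Δ / (1 - q Δ)
      - (δ' Δ * L Δ / β Δ) * β Δ
      - (δ' Δ * L Δ / β Δ) * (2 + β Δ / (1 - q Δ)) * (1 - Real.exp (-2)))
      / (1 + δ' Δ)) atTop (nhds 0) := by
    have h := (((hA.div h1q hene).sub (hδ.mul hβ0)).sub
      ((hδ.mul ((tendsto_const_nhds : Tendsto (fun _ : ℕ => (2:ℝ)) atTop (nhds 2)).add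
        (hβ0.div h1q hene))).mul_const (1 - Real.exp (-2)))).div
      ((tendsto_const_nhds : Tendsto (fun _ : ℕ => (1:ℝ)) atTop (nhds 1)).add hδ0)
      (by norm_num : (1:ℝ) + 0 ≠ 0)
    convert h using 1
    · funext Δ; rfl
    · simp
  refine Tendsto.congr' ?_ hfinal
  filter_upwards [hp2] with Δ hp2
  have hp0 := hp'pos Δ
  have ht0 := ht'pos Δ
  have htpΔ := htp Δ
  have h1x : (0 : ℝ) < 1 - 1 / p' Δ := by
    have : 1 / p' Δ ≤ 1 / 2 := by rw [div_le_div_iff₀ hp0 two_pos]; linarith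
    linarith
  have hq0 : 0 < q Δ := Real.rpow_pos_of_pos h1x _
  have hq1 : q Δ < 1 := by
    have hb1 : 1 - 1 / p' Δ < 1 := by
      have : (0:ℝ) < 1 / p' Δ := by positivity
      linarith
    exact Real.rpow_lt_one h1x.le hb1 (by positivity)
  have ha : (0:ℝ) < 1 - t' Δ / p' Δ * q Δ := by
    have htp1 : t' Δ / p' Δ < 1 := by rw [div_lt_one hp0]; exact htpΔ
    have htp0 : 0 < t' Δ / p' Δ := by positivity
    nlinarith
  have hδΔ := hδpos Δ
  exact (aux_id (t' Δ) (p' Δ) (δ' Δ) (q Δ) (Real.exp (-2)) (L Δ)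
    ht0.ne' hp0.ne' (sub_pos.2 htpΔ).ne' (sub_pos.2 hq1).ne'
    (by linarith : (1:ℝ) + δ' Δ ≠ 0) ha.ne').symm
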